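/- Let G and H be connected non-trivial graphs with H not complete. Then tn(G ∘ H) ≤ 3 · tn(G). -/

import Mathlib

open SimpleGraph

/-- A walk `W` between `u` and `v` is a *tolled walk* if either `u = v` and `W` is trivial,
or `u` and `v` are adjacent and `W` is the single-edge walk, or `u ≠ v` are non-adjacent,
`W` has at least one interior vertex, `u` is adjacent exactly to the interior vertex
at position 1 and `v` exactly to the interior vertex at position `W.length - 1`. -/
def IsTolledWalk {V : Type*} (G : SimpleGraph V) {u v : V} (W : G.Walk u v) : Prop :=
  (u = v ∧ W.length = 0) ∨
  (G.Adj u v ∧ W.support = [u, v]) ∨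
  (¬ G.Adj u v ∧ u ≠ v ∧ 2 ≤ W.length ∧
    (∀ i, 0 < i → i < W.length → (G.Adj u (W.support.getD i u) ↔ i = 1)) ∧
    (∀ i, 0 < i → i < W.length → (G.Adj v (W.support.getD i u) ↔ i = W.length - 1)))

/-- The toll interval between `u` and `v`: vertices lying on some tolled walk. -/
def tollInterval {V : Type*} (G : SimpleGraph V) (u v : V) : Set V :=
  {x | ∃ W : G.Walk u v, IsTolledWalk G W ∧ x ∈ W.support}

/-- A toll set: the toll intervals between its pairs cover the vertex set. -/
def IsTollSet {V : Type*} (G : SimpleGraph V) (S : Set V) : Prop :=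
  ∀ x : V, ∃ u ∈ S, ∃ v ∈ S, x ∈ tollInterval G u v

/-- The toll number: minimum size of a toll set. -/
noncomputable def tollNumber {V : Type*} (G : SimpleGraph V) : ℕ :=
  sInf {n | ∃ S : Set V, S.Finite ∧ S.ncard = n ∧ IsTollSet G S}

/-- `v` is a cut vertex if deleting it disconnects the graph. -/
def IsCutVertex {V : Type*} (G : SimpleGraph V) (v : V) : Prop :=
  ¬ (G.induce {w | w ≠ v}).Preconnected

/-- The extreme vertices of `G` with respect to toll convexity. -/
def extremeVertices {V : Type*} (G : SimpleGraph V) : Set V :=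
  {s | ∀ x y : V, x ≠ s → y ≠ s → s ∉ tollInterval G x y}

/-- The lexicographic product of simple graphs. -/
def lexProd {V W : Type*} (G : SimpleGraph V) (H : SimpleGraph W) : SimpleGraph (V × W) where
  Adj a b := G.Adj a.1 b.1 ∨ (a.1 = b.1 ∧ H.Adj a.2 b.2)
  symm := ⟨by
    rintro a b (h | ⟨h1, h2⟩)
    · exact Or.inl h.symm
    · exact Or.inr ⟨h1.symm, h2.symm⟩⟩
  loopless := ⟨by
    rintro a (h | ⟨_, h⟩)
    · exact G.loopless.irrefl _ h
    · exact H.loopless.irrefl _ h⟩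

/-- Lift of `G` into the lexicographic product along any section `σ`. -/
def lexLiftHom {V W : Type*} (G : SimpleGraph V) (H : SimpleGraph W) (σ : V → W) :
    G →g lexProd G H where
  toFun z := (z, σ z)
  map_rel' h := Or.inl h

lemma list_getD_map {α β : Type*} (f : α → β) (l : List α) (i : ℕ) (h : i < l.length)
    (d : α) (d' : β) : (l.map f).getD i d' = f (l.getD i d) := by
  rw [List.getD_eq_getElem _ _ (by simpa using h), List.getD_eq_getElem _ _ h]
  exact List.getElem_map f

lemma exists_nonadj_of_ne_top {W : Type*} (H : SimpleGraph W) (hH : H ≠ ⊤) :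
    ∃ a b : W, a ≠ b ∧ ¬ H.Adj a b := by
  by_contra h
  push_neg at h
  exact hH (by ext a b; simp only [top_adj]; exact ⟨fun h' => h'.ne, fun hne => h a b hne⟩)

theorem stmt10 {V W : Type*} [Fintype V] [Fintype W] [Nontrivial V] [Nontrivial W]
    (G : SimpleGraph V) (H : SimpleGraph W)
    (hGc : G.Connected) (hHc : H.Connected) (hH : H ≠ ⊤) :
    tollNumber (lexProd G H) ≤ 3 * tollNumber G := by
  classical
  -- a minimum toll set of G exists
  have hne : {n | ∃ S : Set V, S.Finite ∧ S.ncard = n ∧ IsTollSet G S}.Nonempty := by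
    refine ⟨(Set.univ : Set V).ncard, Set.univ, Set.finite_univ, rfl, fun x => ?_⟩
    exact ⟨x, trivial, x, trivial, Walk.nil, Or.inl ⟨rfl, rfl⟩, by simp⟩
  obtain ⟨S, hSfin, hScard, hStoll⟩ :
      tollNumber G ∈ {n | ∃ S : Set V, S.Finite ∧ S.ncard = n ∧ IsTollSet G S} :=
    Nat.sInf_mem hne
  -- a non-adjacent pair in H
  obtain ⟨h₁, h₂, hne12, hnadj⟩ := exists_nonadj_of_ne_top H hH
  -- a neighbor function on V
  have hadj : ∀ u : V, ∃ v, G.Adj u v := by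
    intro u
    obtain ⟨v, hv⟩ := exists_ne u
    obtain ⟨p⟩ := hGc.preconnected u v
    cases p with
    | nil => exact absurd rfl hv
    | cons h _ => exact ⟨_, h⟩
  choose nb hnb using hadj
  set S' : Set (V × W) :=
    ((fun u => (u, h₁)) '' S) ∪ ((fun u => (nb u, h₁)) '' S) ∪ ((fun u => (nb u, h₂)) '' S)
    with hS'def
  have hcard : S'.ncard ≤ 3 * S.ncard := by
    have e1 : ((fun u : V => (u, h₁)) '' S).ncard ≤ S.ncard := Set.ncard_image_le hSfin
    have e2 : ((fun u : V => (nb u, h₁)) '' S).ncard ≤ S.ncard := Set.ncard_image_le hSfin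
    have e3 : ((fun u : V => (nb u, h₂)) '' S).ncard ≤ S.ncard := Set.ncard_image_le hSfin
    have u1 := Set.ncard_union_le
      (((fun u : V => (u, h₁)) '' S) ∪ ((fun u : V => (nb u, h₁)) '' S))
      ((fun u : V => (nb u, h₂)) '' S)
    have u2 := Set.ncard_union_le ((fun u : V => (u, h₁)) '' S) ((fun u : V => (nb u, h₁)) '' S)
    rw [hS'def]
    omega
  have htoll : IsTollSet (lexProd G H) S' := by
    rintro ⟨x, w⟩
    by_cases hx : x ∈ S
    · -- gadget walk (nb x, h₁) — (x, w) — (nb x, h₂)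
      have e1 : (lexProd G H).Adj (nb x, h₁) (x, w) := Or.inl (hnb x).symm
      have e2 : (lexProd G H).Adj (x, w) (nb x, h₂) := Or.inl (hnb x)
      refine ⟨(nb x, h₁), Or.inl (Or.inr (Set.mem_image_of_mem _ hx)),
        (nb x, h₂), Or.inr (Set.mem_image_of_mem _ hx),
        Walk.cons e1 (Walk.cons e2 Walk.nil), ?_, by simp⟩
      refine Or.inr (Or.inr ⟨?_, ?_, ?_, ?_, ?_⟩)
      · rintro (h | ⟨-, h⟩)
        · exact G.irrefl h
        · exact hnadj h
      · intro h
        exact hne12 (congrArg Prod.snd h)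
      · simp
      · intro i hi0 hi2
        simp only [Walk.length_cons, Walk.length_nil] at hi2
        have : i = 1 := by omega
        subst this
        exact iff_of_true e1 rfl
      · intro i hi0 hi2
        simp only [Walk.length_cons, Walk.length_nil] at hi2 ⊢
        have : i = 1 := by omega
        subst this
        exact iff_of_true e2.symm rfl
    · -- x is an interior vertex of a tolled walk between two members of S
      obtain ⟨p, hp, q, hq, Wg, hWt, hxs⟩ := hStoll x
      have hxp : x ≠ p := fun h => hx (h ▸ hp)
      have hxq : x ≠ q := fun h => hx (h ▸ hq)
      rcases hWt with ⟨hpq, hlen0⟩ | ⟨hadjpq, hsup⟩ | ⟨hnadjpq, hpqne, hlen, hA, hB⟩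
      · exfalso
        have h1 := Wg.support_eq_cons
        have h2 := Wg.length_support
        rw [hlen0, h1] at h2
        simp only [List.length_cons, Nat.add_left_cancel_iff] at h2
        have h3 : Wg.support.tail = [] := List.length_eq_zero_iff.mp (by omega)
        rw [h1, h3] at hxs
        simp at hxs
        exact hxp hxs
      · exfalso
        rw [hsup] at hxs
        simp at hxs
        rcases hxs with h | h
        · exact hxp h
        · exact hxq h
      · set σ : V → W := fun z => if z = p ∨ z = q then h₁ else w with hσdef
        have hσp : σ p = h₁ := by simp [hσdef]
        have hσq : σ q = h₁ := by simp [hσdef]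
        have hσx : σ x = w := by simp [hσdef, hxp, hxq]
        set f := lexLiftHom G H σ with hfdef
        set W' : (lexProd G H).Walk (p, σ p) (q, σ q) := Wg.map f with hW'def
        have hlen' : W'.length = Wg.length := Walk.length_map f Wg
        have hsup' : W'.support = Wg.support.map f := Walk.support_map f Wg
        have hgetD : ∀ i, i < Wg.length →
            W'.support.getD i (p, σ p) = f (Wg.support.getD i p) := by
          intro i hi
          have hl1 : i < Wg.support.length := by rw [Wg.length_support]; omega
          rw [hsup']
          exact list_getD_map (⇑f) Wg.support i hl1 p (p, σ p)
        refine ⟨(p, σ p), by rw [hσp]; exact Or.inl (Or.inl (Set.mem_image_of_mem _ hp)),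
          (q, σ q), by rw [hσq]; exact Or.inl (Or.inl (Set.mem_image_of_mem _ hq)),
          W', Or.inr (Or.inr ⟨?_, ?_, ?_, ?_, ?_⟩), ?_⟩
        · rintro (h | ⟨h, -⟩)
          · exact hnadjpq h
          · exact hpqne h
        · intro h
          exact hpqne (congrArg Prod.fst h)
        · rw [hlen']; exact hlen
        · intro i hi0 hilt
          rw [hlen'] at hilt
          rw [hgetD i hilt]
          set z := Wg.support.getD i p with hz
          have hGz := hA i hi0 hilt
          constructor
          · rintro (h | ⟨he, hadj'⟩)
            · exact hGz.mp h
            · exfalso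
              have hze : z = p := he.symm
              rw [show f z = (z, σ z) from rfl] at hadj'
              simp only at hadj'
              rw [hze, hσp] at hadj'
              exact H.irrefl hadj'
          · intro h1
            exact Or.inl (hGz.mpr h1)
        · intro i hi0 hilt
          rw [hlen'] at hilt
          rw [hgetD i hilt, hlen']
          set z := Wg.support.getD i p with hz
          have hGz := hB i hi0 hilt
          constructor
          · rintro (h | ⟨he, hadj'⟩)
            · exact hGz.mp h
            · exfalso
              have hze : z = q := he.symm
              rw [show f z = (z, σ z) from rfl] at hadj'
              simp only at hadj'
              rw [hze, hσq] at hadj'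
              exact H.irrefl hadj'
          · intro h1
            exact Or.inl (hGz.mpr h1)
        · have : (x, w) = f x := by
            rw [show f x = (x, σ x) from rfl, hσx]
          rw [this, hsup']
          exact List.mem_map_of_mem (f := ⇑f) hxs
  have hmem : S'.ncard ∈ {n | ∃ T : Set (V × W), T.Finite ∧ T.ncard = n ∧
      IsTollSet (lexProd G H) T} := ⟨S', Set.toFinite S', rfl, htoll⟩
  calc tollNumber (lexProd G H) ≤ S'.ncard := Nat.sInf_le hmem
    _ ≤ 3 * S.ncard := hcard
    _ = 3 * tollNumber G := by rw [hScard]
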